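/- Let q ≥ 3 and k ≥ 2 be integers, and let γ_k be the dominant root of Φ_{q,k}, i.e. the unique real root of Φ_{q,k}(t) = t^k − q t^{k−1} − t^{k−2} − ⋯ − t − 1 in (q, q+1). Then 1/(q+1) < g_{q,k}(γ_k) < 1/q, where g_{q,k}(x) = (x−1)/((k+1)x² − (q+1)kx + (q−1)(k−1)). -/

import Mathlib

/-- For integers `q ≥ 3` and `k ≥ 2`, the dominant root `γ_k` of
`Φ_{q,k}(t) = t^k − q·t^{k-1} − t^{k-2} − ⋯ − t − 1` (its unique real root in `(q, q+1)`)
satisfies `1/(q+1) < g_{q,k}(γ_k) < 1/q`. -/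
theorem qk_g_at_dominant_root
    (q : ℤ) (k : ℕ) (hq : 3 ≤ q) (hk : 2 ≤ k)
    (γ : ℝ)
    (hγ_lb : (q : ℝ) < γ) (hγ_ub : γ < (q : ℝ) + 1)
    (hγ_root : γ ^ k - (q : ℝ) * γ ^ (k - 1) - ∑ i ∈ Finset.range (k - 1), γ ^ i = 0)
    (g : ℝ → ℝ)
    (hg : ∀ x : ℝ, g x = (x - 1) /
      (((k : ℝ) + 1) * x ^ 2 - ((q : ℝ) + 1) * (k : ℝ) * x + ((q : ℝ) - 1) * ((k : ℝ) - 1))) :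
    1 / ((q : ℝ) + 1) < g γ ∧ g γ < 1 / (q : ℝ) := by
  obtain ⟨m, rfl⟩ : ∃ m, k = m + 1 := ⟨k - 1, by omega⟩
  have hm : 1 ≤ m := by omega
  have hqR : (3 : ℝ) ≤ (q : ℝ) := by exact_mod_cast hq
  have hγ3 : (3 : ℝ) < γ := lt_of_le_of_lt hqR hγ_lb
  have hG0 : 0 < γ ^ m := by positivity
  -- turn the root equation into a polynomial identity
  have hsimp : m + 1 - 1 = m := rfl
  rw [hsimp] at hγ_root
  have heq : ∑ i ∈ Finset.range m, γ ^ i = γ ^ (m + 1) - (q : ℝ) * γ ^ m := by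
    linarith
  have h2 : (γ ^ (m + 1) - (q : ℝ) * γ ^ m) * (γ - 1) = γ ^ m - 1 := by
    rw [← heq]; exact geom_sum_mul γ m
  have hp : γ ^ (m + 1) = γ ^ m * γ := pow_succ γ m
  rw [hp] at h2
  have hkey : γ ^ m * (γ ^ 2 - ((q : ℝ) + 1) * γ + ((q : ℝ) - 1)) = -1 := by
    linear_combination h2
  -- size bounds
  have h3m : 1 + 2 * (m : ℝ) ≤ 3 ^ m := by
    have := one_add_mul_le_pow (by norm_num : (-2 : ℝ) ≤ 2) m
    norm_num at this
    linarith
  have hpow : (3 : ℝ) ^ m ≤ γ ^ m := pow_le_pow_left₀ (by norm_num) hγ3.le m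
  have hm1 : (1 : ℝ) ≤ (m : ℝ) := by exact_mod_cast hm
  have h2G : (m : ℝ) + 2 < 2 * γ ^ m := by linarith [hm1, h3m, hpow]
  set D : ℝ := ((m : ℝ) + 1 + 1) * γ ^ 2 - ((q : ℝ) + 1) * ((m : ℝ) + 1) * γ +
      ((q : ℝ) - 1) * ((m : ℝ) + 1 - 1) with hD
  have key1 : D * γ ^ m - (q : ℝ) * (γ - 1) * γ ^ m =
      γ ^ m * (γ - (q : ℝ)) + 2 * γ ^ m - ((m : ℝ) + 2) := by
    rw [hD]; linear_combination ((m : ℝ) + 2) * hkey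
  have key2 : ((q : ℝ) + 1) * (γ - 1) * γ ^ m - D * γ ^ m =
      ((q : ℝ) - 3) * γ ^ m + ((m : ℝ) + 2) := by
    rw [hD]; linear_combination (-(m : ℝ) - 2) * hkey
  have hDG : (q : ℝ) * (γ - 1) * γ ^ m < D * γ ^ m := by
    nlinarith [mul_pos hG0 (sub_pos.mpr hγ_lb)]
  have hDG2 : D * γ ^ m < ((q : ℝ) + 1) * (γ - 1) * γ ^ m := by
    nlinarith [mul_pos (by linarith : (0:ℝ) < (q : ℝ) - 3 + 1) hG0, hG0]
  have hD_lb : (q : ℝ) * (γ - 1) < D := (mul_lt_mul_iff_of_pos_right hG0).mp hDG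
  have hD_ub : D < ((q : ℝ) + 1) * (γ - 1) := (mul_lt_mul_iff_of_pos_right hG0).mp hDG2
  have hDpos : 0 < D := by nlinarith
  rw [hg]
  have hcast : (((m + 1 : ℕ) : ℝ)) = (m : ℝ) + 1 := by push_cast; ring
  rw [hcast]
  constructor
  · rw [div_lt_div_iff₀ (by linarith : (0:ℝ) < (q : ℝ) + 1) hDpos]
    linarith [hD_ub]
  · rw [div_lt_div_iff₀ hDpos (by linarith : (0:ℝ) < (q : ℝ))]
    linarith [hD_lb]
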